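/- Variance of the high-dimensional Multi-bit mechanism: with sampling of k of d coordinates uniformly without replacement, per-coordinate budget ε/k, and calibration x̃ = (d(e^{ε/k}+1))/(k(e^{ε/k}-1)) · x̂ where x̂ is the raw output (±1 if sampled, 0 otherwise), the calibrated estimate satisfies E[x̃_j] = x_j and Var[x̃_j] = (d/k)·((e^{ε/k}+1)/(e^{ε/k}-1))² − x_j² for every coordinate j. -/

import Mathlib

open Real

/-- Mean and variance of the high-dimensional Multi-bit mechanism: coordinate `j` is
sampled with probability `k/d`; conditionally on sampling, the raw output is `1` with
probability `p = 1/(e^{ε/k}+1) + ((x_j+1)/2)·(e^{ε/k}-1)/(e^{ε/k}+1)` and `-1`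
otherwise; if not sampled the raw output is `0`.  The calibrated output is
`x̃_j = (d(e^{ε/k}+1))/(k(e^{ε/k}-1)) · (raw output)`.  Then `E[x̃_j] = x_j` and
`Var[x̃_j] = (d/k)·((e^{ε/k}+1)/(e^{ε/k}-1))² − x_j²`. -/
theorem multibit_highdim_mean_variance (d k : ℕ) (hd : 0 < d) (hk : 0 < k) (hkd : k ≤ d)
    (ε : ℝ) (hε : 0 < ε) (x : ℝ) (hx : x ∈ Set.Icc (-1 : ℝ) 1) :
    let e := Real.exp (ε / k)
    let p := 1 / (e + 1) + (x + 1) / 2 * ((e - 1) / (e + 1))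
    let lam := (d : ℝ) * (e + 1) / ((k : ℝ) * (e - 1))
    -- expectation: E[x̃_j] = x_j
    ((k : ℝ) / d) * (p * (lam * 1) + (1 - p) * (lam * (-1))) +
        (1 - (k : ℝ) / d) * (lam * 0) = x ∧
    -- variance: E[x̃_j²] − (E[x̃_j])² = (d/k)((e+1)/(e-1))² − x_j²
    (((k : ℝ) / d) * (p * (lam * 1) ^ 2 + (1 - p) * (lam * (-1)) ^ 2) +
          (1 - (k : ℝ) / d) * (lam * 0) ^ 2) -
        (((k : ℝ) / d) * (p * (lam * 1) + (1 - p) * (lam * (-1))) +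
            (1 - (k : ℝ) / d) * (lam * 0)) ^ 2 =
      ((d : ℝ) / k) * ((e + 1) / (e - 1)) ^ 2 - x ^ 2 := by
  intro e p lam
  have he : 1 < e := by
    have : 0 < ε / k := div_pos hε (by exact_mod_cast hk)
    simpa [e] using Real.one_lt_exp_iff.mpr this
  have he1 : e - 1 ≠ 0 := by linarith
  have he2 : e + 1 ≠ 0 := by linarith
  have hdz : (d:ℝ) ≠ 0 := by exact_mod_cast hd.ne'
  have hkz : (k:ℝ) ≠ 0 := by exact_mod_cast hk.ne'
  constructor <;> (simp only [p, lam]; field_simp; ring)
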